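/- Let G be a group and ε ∈ G a central element with ε² = 1. Let H = Circle ⋊ ℤ₂ be the semidirect product in which the nontrivial element of ℤ₂ acts on the circle group by complex conjugation. Let N be the subgroup of G × H generated by (ε, (−1, 0̂)) and N_c the subgroup of G × Circle generated by (ε, −1); both generators are central of order dividing 2, so N and N_c are normal of order at most 2. Then there is a group isomorphism (G × H)/N ≅ ((G × Circle)/N_c) ⋊_ξ ℤ₂, where ξ sends the nontrivial element of ℤ₂ to the automorphism of (G × Circle)/N_c induced by (g, z) ↦ (g, conj(z)). (For G = Spin(V,h) and ε = −1 this is the statement Spin^o₊(V,h) ≅ Spin^c(V,h) ⋊ ℤ₂.) -/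

import Mathlib

open Complex

/-- Complex conjugation as a group endomorphism of the circle group. -/
noncomputable def conjC : Circle →* Circle where
  toFun z := ⟨(starRingEnd ℂ) (z : ℂ), by
    simp only [Submonoid.unitSphere, Metric.mem_sphere, dist_zero_right]
    simp [Circle.norm_coe]⟩
  map_one' := by ext; simp
  map_mul' a b := by ext; simp; rfl

/-- The element `-1` of the circle group. -/
noncomputable def negOneC : Circle := ⟨-1, by
  simp only [Submonoid.unitSphere, Metric.mem_sphere, dist_zero_right]
  simp⟩

/-- Let `G` be a group, `ε ∈ G` a central element with `ε² = 1`, and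
`H = Circle ⋊ ℤ₂` the semidirect product where the nontrivial element of `ℤ₂` acts by
complex conjugation.  Let `N ≤ G × H` be generated by `(ε, (−1, 0̂))` and
`Nc ≤ G × Circle` generated by `(ε, −1)` (both normal).  Then
`(G × H)/N ≅ ((G × Circle)/Nc) ⋊_ξ ℤ₂`, where `ξ` sends the nontrivial element of `ℤ₂`
to the automorphism induced by `(g, z) ↦ (g, conj z)`.  For `G = Spin(V,h)`, `ε = −1`
this is `Spin^o₊(V,h) ≅ Spin^c(V,h) ⋊ ℤ₂`. -/
theorem spino_plus_iso_spinc_rtimes_z2 {G : Type*} [Group G]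
    (ε : G) (hcen : ∀ g : G, ε * g = g * ε) (hsq : ε * ε = 1)
    (act : Multiplicative (ZMod 2) →* MulAut Circle)
    (hact : ∀ z : Circle, act (Multiplicative.ofAdd 1) z = conjC z)
    (N : Subgroup (G × (Circle ⋊[act] Multiplicative (ZMod 2)))) [N.Normal]
    (hN : N = Subgroup.zpowers (ε, ⟨negOneC, 1⟩))
    (Nc : Subgroup (G × Circle)) [Nc.Normal]
    (hNc : Nc = Subgroup.zpowers (ε, negOneC))
    (ξ : Multiplicative (ZMod 2) →* MulAut ((G × Circle) ⧸ Nc))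
    (hξ : ∀ (g : G) (z : Circle),
      ξ (Multiplicative.ofAdd 1) (QuotientGroup.mk (g, z)) =
        QuotientGroup.mk (g, conjC z)) :
    Nonempty ((G × (Circle ⋊[act] Multiplicative (ZMod 2))) ⧸ N ≃*
      (((G × Circle) ⧸ Nc) ⋊[ξ] Multiplicative (ZMod 2))) := by
  have hk : ∀ k : Multiplicative (ZMod 2), k = 1 ∨ k = Multiplicative.ofAdd 1 := by decide
  have key : ∀ (k : Multiplicative (ZMod 2)) (g : G) (z : Circle),
      ξ k (QuotientGroup.mk (g, z)) = QuotientGroup.mk (g, act k z) := by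
    intro k g z
    rcases hk k with h | h <;> subst h
    · simp
    · rw [hξ, hact]
  have memNc : (ε, negOneC) ∈ Nc := by rw [hNc]; exact Subgroup.mem_zpowers _
  have memN : ((ε, ⟨negOneC, 1⟩) : G × (Circle ⋊[act] Multiplicative (ZMod 2))) ∈ N := by
    rw [hN]; exact Subgroup.mem_zpowers _
  let φ0 : G × (Circle ⋊[act] Multiplicative (ZMod 2)) →*
      (((G × Circle) ⧸ Nc) ⋊[ξ] Multiplicative (ZMod 2)) :=
    { toFun := fun p => ⟨QuotientGroup.mk (p.1, p.2.left), p.2.right⟩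
      map_one' := rfl
      map_mul' := fun p q => by
        refine SemidirectProduct.ext ?_ rfl
        show QuotientGroup.mk ((p.1 * q.1, p.2.left * act p.2.right q.2.left) : G × Circle)
          = QuotientGroup.mk ((p.1, p.2.left) : G × Circle) *
              ξ p.2.right (QuotientGroup.mk (q.1, q.2.left))
        rw [key]
        rfl }
  have hφ0N : ∀ x ∈ N, φ0 x = 1 := by
    rw [hN]
    rintro x ⟨n, rfl⟩
    have h1 : φ0 ((ε, ⟨negOneC, 1⟩) : G × (Circle ⋊[act] Multiplicative (ZMod 2))) = 1 := by
      refine SemidirectProduct.ext ?_ rfl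
      show QuotientGroup.mk ((ε, negOneC) : G × Circle) = 1
      exact (QuotientGroup.eq_one_iff _).2 memNc
    rw [map_zpow, h1, one_zpow]
  let φ := QuotientGroup.lift N φ0 hφ0N
  let A0 : G × Circle →* (G × (Circle ⋊[act] Multiplicative (ZMod 2))) ⧸ N :=
    { toFun := fun p => QuotientGroup.mk (p.1, ⟨p.2, 1⟩)
      map_one' := rfl
      map_mul' := fun p q => by
        have hs : ((⟨p.2, 1⟩ : Circle ⋊[act] Multiplicative (ZMod 2)) * ⟨q.2, 1⟩)
            = ⟨p.2 * q.2, 1⟩ := by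
          refine SemidirectProduct.ext ?_ rfl
          show p.2 * act 1 q.2 = p.2 * q.2
          simp
        have hp : ((p.1, (⟨p.2, 1⟩ : Circle ⋊[act] Multiplicative (ZMod 2)))) *
            ((q.1, (⟨q.2, 1⟩ : Circle ⋊[act] Multiplicative (ZMod 2))))
            = ((p * q).1, (⟨(p * q).2, 1⟩ : Circle ⋊[act] Multiplicative (ZMod 2))) := by
          rw [Prod.mk_mul_mk, hs]; rfl
        show QuotientGroup.mk _ = QuotientGroup.mk _ * QuotientGroup.mk _
        rw [← QuotientGroup.mk_mul, hp] }
  have hA0 : ∀ x ∈ Nc, A0 x = 1 := by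
    rw [hNc]
    rintro x ⟨n, rfl⟩
    have h1 : A0 (ε, negOneC) = 1 := (QuotientGroup.eq_one_iff _).2 memN
    rw [map_zpow, h1, one_zpow]
  let A : (G × Circle) ⧸ Nc →* (G × (Circle ⋊[act] Multiplicative (ZMod 2))) ⧸ N :=
    QuotientGroup.lift Nc A0 hA0
  let B : Multiplicative (ZMod 2) →* (G × (Circle ⋊[act] Multiplicative (ZMod 2))) ⧸ N :=
    { toFun := fun k => QuotientGroup.mk (1, ⟨1, k⟩)
      map_one' := rfl
      map_mul' := fun k1 k2 => by
        have hs : ((⟨1, k1⟩ : Circle ⋊[act] Multiplicative (ZMod 2)) * ⟨1, k2⟩)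
            = ⟨1, k1 * k2⟩ := by
          refine SemidirectProduct.ext ?_ rfl
          show (1 : Circle) * act k1 1 = 1
          simp
        have hp : (((1 : G), (⟨1, k1⟩ : Circle ⋊[act] Multiplicative (ZMod 2)))) *
            (((1 : G), (⟨1, k2⟩ : Circle ⋊[act] Multiplicative (ZMod 2))))
            = ((1 : G), (⟨1, k1 * k2⟩ : Circle ⋊[act] Multiplicative (ZMod 2))) := by
          rw [Prod.mk_mul_mk, hs, one_mul]
        show QuotientGroup.mk _ = QuotientGroup.mk _ * QuotientGroup.mk _
        rw [← QuotientGroup.mk_mul, hp] }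
  have compat : ∀ k : Multiplicative (ZMod 2),
      A.comp (ξ k).toMonoidHom = (MulAut.conj (B k)).toMonoidHom.comp A := by
    intro k
    ext x
    obtain ⟨g, z⟩ := x
    show A (ξ k (QuotientGroup.mk (g, z))) = B k * A (QuotientGroup.mk (g, z)) * (B k)⁻¹
    rw [key]
    show QuotientGroup.mk ((g, ⟨act k z, 1⟩) : G × (Circle ⋊[act] Multiplicative (ZMod 2)))
      = QuotientGroup.mk (((1 : G), (⟨1, k⟩ : Circle ⋊[act] Multiplicative (ZMod 2))))
        * QuotientGroup.mk ((g, (⟨z, 1⟩ : Circle ⋊[act] Multiplicative (ZMod 2))))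
        * (QuotientGroup.mk (((1 : G), (⟨1, k⟩ : Circle ⋊[act] Multiplicative (ZMod 2)))))⁻¹
    rw [← QuotientGroup.mk_inv, ← QuotientGroup.mk_mul, ← QuotientGroup.mk_mul]
    congr 1
    refine Prod.ext (by simp) ?_
    show (⟨act k z, 1⟩ : Circle ⋊[act] Multiplicative (ZMod 2))
      = ((⟨1, k⟩ : Circle ⋊[act] Multiplicative (ZMod 2)) * ⟨z, 1⟩)
        * (⟨1, k⟩ : Circle ⋊[act] Multiplicative (ZMod 2))⁻¹
    refine (SemidirectProduct.ext ?_ ?_).symm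
    · show (1 : Circle) * act k z * act (k * 1) ((act k⁻¹) 1⁻¹) = act k z
      simp
    · show k * 1 * k⁻¹ = 1
      simp
  let ψ : (((G × Circle) ⧸ Nc) ⋊[ξ] Multiplicative (ZMod 2))
      →* (G × (Circle ⋊[act] Multiplicative (ZMod 2))) ⧸ N :=
    SemidirectProduct.lift A B compat
  have hψφ : ψ.comp φ = MonoidHom.id _ := by
    apply MonoidHom.ext
    intro x
    refine QuotientGroup.induction_on x ?_
    rintro ⟨g, z, k⟩
    simp only [MonoidHom.comp_apply, MonoidHom.id_apply]
    show ψ (φ0 (g, ⟨z, k⟩)) = QuotientGroup.mk (g, (⟨z, k⟩ : Circle ⋊[act] Multiplicative (ZMod 2)))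
    have hd : (φ0 (g, ⟨z, k⟩)) = SemidirectProduct.inl (QuotientGroup.mk (g, z))
        * SemidirectProduct.inr k := by
      refine SemidirectProduct.ext ?_ ?_ <;> simp [φ0]
    rw [hd, map_mul, SemidirectProduct.lift_inl, SemidirectProduct.lift_inr]
    show A0 (g, z) * B k = _
    show QuotientGroup.mk ((g, (⟨z, 1⟩ : Circle ⋊[act] Multiplicative (ZMod 2))))
      * QuotientGroup.mk (((1 : G), (⟨1, k⟩ : Circle ⋊[act] Multiplicative (ZMod 2)))) = _
    rw [← QuotientGroup.mk_mul, Prod.mk_mul_mk, mul_one]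
    congr 2
    refine SemidirectProduct.ext ?_ (one_mul k)
    show z * act 1 1 = z
    simp
  have hφψ : φ.comp ψ = MonoidHom.id _ := by
    apply SemidirectProduct.hom_ext
    · apply MonoidHom.ext
      intro q
      refine QuotientGroup.induction_on q ?_
      rintro ⟨g, z⟩
      simp only [MonoidHom.comp_apply, MonoidHom.id_apply, ψ, SemidirectProduct.lift_inl]
      show φ (A0 (g, z)) = _
      show φ0 (g, ⟨z, 1⟩) = _
      rfl
    · apply MonoidHom.ext
      intro k
      simp only [MonoidHom.comp_apply, MonoidHom.id_apply, ψ, SemidirectProduct.lift_inr]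
      show φ0 (1, ⟨1, k⟩) = _
      refine SemidirectProduct.ext ?_ rfl
      show QuotientGroup.mk (((1 : G), (1 : Circle))) = (SemidirectProduct.inr k :
        ((G × Circle) ⧸ Nc) ⋊[ξ] Multiplicative (ZMod 2)).left
      simp
      exact Nc.one_mem
  exact ⟨MonoidHom.toMulEquiv φ ψ hψφ hφψ⟩
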